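/- arXiv:2103.06394 — 6 statements merged into one kernel-verified Lean document; each statement's English description precedes it below -/
import Mathlib

section
/- Let G be a group, φ : G → G a group homomorphism and r ≥ 1 a natural number. Assume that the Lang-type map a ↦ a⁻¹·φ^r(a) is surjective on G. Then the norm map N : G → G, N(x) = x·φ(x)·φ²(x)⋯φ^{r-1}(x) (ordered product for i = 0, …, r−1), is surjective. -/
lemma norm_telescope {G : Type*} [Group G] (φ : G →* G) (a : G) :
    ∀ r : ℕ, ((List.range r).map (fun i => (⇑φ)^[i] (a⁻¹ * φ a))).prod = a⁻¹ * (⇑φ)^[r] a := by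
  intro r
  induction r with
  | zero => simp
  | succ n ih =>
    rw [List.range_succ, List.map_append, List.prod_append, ih]
    simp [Function.iterate_succ_apply', ← Function.iterate_succ_apply, mul_assoc]


/-- If the Lang-type map `a ↦ a⁻¹ * φ^r a` is surjective on a group `G`
(for a group homomorphism `φ : G → G` and `r ≥ 1`), then the twisted norm map
`x ↦ x * φ x * φ² x * ⋯ * φ^{r-1} x` is surjective. -/
theorem norm_map_surjective {G : Type*} [Group G] (φ : G →* G) (r : ℕ) (hr : 1 ≤ r)
    (hLang : Function.Surjective (fun a : G => a⁻¹ * (⇑φ)^[r] a)) :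
    Function.Surjective
      (fun x : G => ((List.range r).map (fun i => (⇑φ)^[i] x)).prod) := by
  intro g
  obtain ⟨a, ha⟩ := hLang g
  exact ⟨a⁻¹ * φ a, (norm_telescope φ a r).trans ha⟩
end

section
/- Let G be a group and E a subgroup of G. Then E is almost abelian in G if and only if the image of E under the quotient map G → G/Z(G) (equivalently, the subgroup E·Z(G)/Z(G)) is almost abelian in G/Z(G). -/
open scoped commutatorElement

/-- A subgroup `D` of a group `G` is *almost abelian in `G`* if there is an `n` such that
the image of `D` in `G / Z_n(G)` is abelian, i.e. all commutators of elements of `D` lie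
in the `n`-th term of the upper central series of `G`. -/
def AlmostAbelian {G : Type*} [Group G] (D : Subgroup G) : Prop :=
  ∃ n : ℕ, ∀ a ∈ D, ∀ b ∈ D, ⁅a, b⁆ ∈ upperCentralSeries G n

/-- A subgroup `E` of `G` is almost abelian in `G` if and only if its image
`E Z(G)/Z(G)` under the quotient map `G → G/Z(G)` is almost abelian in `G/Z(G)`. -/
theorem almostAbelian_iff_map_center {G : Type*} [Group G] (E : Subgroup G) :
    AlmostAbelian E ↔
      AlmostAbelian (E.map (QuotientGroup.mk' (Subgroup.center G))) := by
  constructor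
  · rintro ⟨n, hn⟩
    refine ⟨n, ?_⟩
    rintro _ ⟨a, ha, rfl⟩ _ ⟨b, hb, rfl⟩
    have h : ⁅a, b⁆ ∈ upperCentralSeries G (n + 1) :=
      upperCentralSeries_mono G n.le_succ (hn a ha b hb)
    change ⁅a, b⁆ ∈ Subgroup.upperCentralSeries G (Nat.succ n) at h
    rw [← comap_upperCentralSeries_quotient_center] at h
    simpa [commutatorElement_def, upperCentralSeries] using h
  · rintro ⟨n, hn⟩
    refine ⟨n + 1, ?_⟩
    intro a ha b hb
    change ⁅a, b⁆ ∈ Subgroup.upperCentralSeries G (Nat.succ n)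
    rw [← comap_upperCentralSeries_quotient_center]
    have := hn _ ⟨a, ha, rfl⟩ _ ⟨b, hb, rfl⟩
    simpa [commutatorElement_def, upperCentralSeries] using this
end

section
/- Let G be a group, γ an automorphism of G, and v ∈ G an element of finite odd order such that γ(v) = v⁻¹. If w ∈ G satisfies γ(w)·w⁻¹ ∈ ⟨v⟩ (the cyclic subgroup generated by v), then there exists y ∈ ⟨v⟩ such that γ(y·w) = y·w. -/
/-- Let `γ` be an automorphism of a group `G` and `v ∈ G` an element of finite odd order
with `γ v = v⁻¹`. If `w ∈ G` satisfies `γ w * w⁻¹ ∈ ⟨v⟩`, then there is `y ∈ ⟨v⟩` such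
that `y * w` is fixed by `γ`. -/
theorem exists_gamma_stable_rep_of_odd {G : Type*} [Group G] (γ : G ≃* G) (v : G)
    (hodd : Odd (orderOf v)) (hfin : IsOfFinOrder v) (hv : γ v = v⁻¹) (w : G)
    (hw : γ w * w⁻¹ ∈ Subgroup.zpowers v) :
    ∃ y ∈ Subgroup.zpowers v, γ (y * w) = y * w := by
  obtain ⟨k, hk⟩ := hw
  obtain ⟨t, ht⟩ := hodd
  have hk' : v ^ k = γ w * w⁻¹ := hk
  have hγw : γ w = v ^ k * w := by rw [hk', inv_mul_cancel_right]
  have h1 : v ^ ((orderOf v : ℤ)) = 1 := by exact_mod_cast pow_orderOf_eq_one v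
  refine ⟨v ^ (k * (t + 1)), ⟨k * (t + 1), rfl⟩, ?_⟩
  rw [map_mul, map_zpow, hv, hγw, inv_zpow, ← zpow_neg, ← mul_assoc, ← zpow_add]
  congr 1
  calc v ^ (-(k * (t + 1)) + k)
      = v ^ (k * (t + 1)) * v ^ ((orderOf v : ℤ) * (-k)) := by
        rw [← zpow_add]; congr 1; push_cast [ht]; ring
    _ = v ^ (k * (t + 1)) := by rw [zpow_mul v ((orderOf v : ℤ)) (-k), h1, one_zpow, mul_one]
end

section
/- Let G be a group, γ an automorphism of G, v ∈ G an element of finite order with γ(v) = v³, and ε : G → {±1} a group homomorphism with ε(v) = −1 and ε(γ(x)) = ε(x) for all x ∈ G. If w ∈ G satisfies γ(w)·w⁻¹ ∈ ⟨v⟩ (the cyclic subgroup generated by v), then there exists y ∈ ⟨v⟩ such that γ(y·w) = y·w. -/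
/-- Let `γ` be an automorphism of a group `G`, `v ∈ G` an element of finite order with
`γ v = v³`, and `ε : G → {±1}` a group homomorphism with `ε v = -1` which is invariant
under `γ`. If `w ∈ G` satisfies `γ w * w⁻¹ ∈ ⟨v⟩`, then there is `y ∈ ⟨v⟩` such that
`y * w` is fixed by `γ`. -/
theorem exists_gamma_stable_rep_of_sign {G : Type*} [Group G] (γ : G ≃* G) (v : G)
    (hfin : IsOfFinOrder v) (hv : γ v = v ^ 3) (ε : G →* ℤˣ) (hεv : ε v = -1)
    (hεγ : ∀ x : G, ε (γ x) = ε x) (w : G)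
    (hw : γ w * w⁻¹ ∈ Subgroup.zpowers v) :
    ∃ y ∈ Subgroup.zpowers v, γ (y * w) = y * w := by
  obtain ⟨k, hk⟩ := hw
  simp only at hk
  have hε1 : ((-1 : ℤˣ)) ^ k = 1 := by
    have := congrArg ε hk
    simp only [map_mul, map_inv, map_zpow, hεγ, hεv] at this
    simpa using this
  have hev : Even k := by
    rcases Int.even_or_odd k with h | h
    · exact h
    · exfalso
      obtain ⟨n, hn⟩ := h
      rw [hn, zpow_add, zpow_mul, zpow_one] at hε1
      rw [show ((-1:ℤˣ)^(2:ℤ)) = 1 by decide] at hε1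
      simp at hε1
  obtain ⟨m, hm⟩ := hev
  refine ⟨v ^ (-m), ⟨-m, rfl⟩, ?_⟩
  have hw' : γ w = v ^ k * w := by
    rw [hk]; group
  have hγv : ∀ n : ℤ, γ (v ^ n) = v ^ (3 * n) := by
    intro n
    rw [map_zpow, hv, ← zpow_natCast, ← zpow_mul]
    norm_num [mul_comm]
  rw [map_mul, hw', hγv, ← mul_assoc, ← zpow_add]
  congr 1
  rw [hm]; ring_nf
end

section
/- Let m, e ≥ 1 be natural numbers and set N = m·e. Let ρ_m denote the reversal permutation of {0, 1, …, m−1} given by j ↦ m−1−j, and ρ_N the reversal permutation of {0, 1, …, N−1} given by x ↦ N−1−x. Then for every permutation σ of {0, …, m−1} commuting with ρ_m, there exists a permutation w of {0, …, N−1} commuting with ρ_N such that w maps the j-th block {j·e, j·e+1, …, j·e+e−1} onto the σ(j)-th block for every j; equivalently, ⌊w(x)/e⌋ = σ(⌊x/e⌋) for all x. -/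
lemma divNat_finProdFinEquiv {m e : ℕ} (a : Fin m) (b : Fin e) :
    (finProdFinEquiv (a, b)).divNat = a :=
  congrArg Prod.fst (finProdFinEquiv.symm_apply_apply (a, b))

lemma eq_finProdFinEquiv {m e : ℕ} (x : Fin (m * e)) :
    x = finProdFinEquiv (x.divNat, x.modNat) := by
  have hsym : finProdFinEquiv.symm x = (x.divNat, x.modNat) := rfl
  rw [← hsym, Equiv.apply_symm_apply]

lemma rev_finProdFinEquiv {m e : ℕ} (a : Fin m) (b : Fin e) :
    Fin.rev (finProdFinEquiv (a, b)) = finProdFinEquiv (a.rev, b.rev) := by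
  apply Fin.ext
  simp only [finProdFinEquiv_apply_val, Fin.val_rev]
  obtain ⟨a', h⟩ : ∃ a', m = a + 1 + a' := ⟨m - 1 - a, by have := a.isLt; omega⟩
  have hb := b.isLt
  have h1 : m * e = e * ↑a + e + e * a' := by
    conv_lhs => rw [h]
    ring
  have h2 : e * (m - (↑a + 1)) = e * a' := by
    conv_lhs => rw [show m - ((a : ℕ) + 1) = a' from by omega]
  rw [h2, h1]
  generalize e * (a : ℕ) = p
  generalize e * a' = q
  omega

/-- Let `N = m * e`. Every permutation `σ` of the block indices `{0,…,m-1}` commuting with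
the reversal `j ↦ m-1-j` lifts to a permutation `w` of `{0,…,N-1}` commuting with the
reversal `x ↦ N-1-x` and mapping the `j`-th block `{j*e,…,j*e+e-1}` onto the `σ(j)`-th
block, i.e. `⌊w(x)/e⌋ = σ(⌊x/e⌋)` for all `x`. -/
theorem exists_rev_commuting_block_lift (m e : ℕ) (hm : 1 ≤ m) (he : 1 ≤ e)
    (σ : Equiv.Perm (Fin m)) (hσ : Commute σ Fin.revPerm) :
    ∃ w : Equiv.Perm (Fin (m * e)), Commute w Fin.revPerm ∧
      ∀ x : Fin (m * e), Fin.divNat (w x) = σ (Fin.divNat x) := by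
  refine ⟨(finProdFinEquiv : Fin m × Fin e ≃ _).permCongr (σ.prodCongr (Equiv.refl _)), ?_, ?_⟩
  · ext x
    have hcomm : ∀ j : Fin m, σ j.rev = (σ j).rev := by
      intro j
      have := congrFun (congrArg (⇑) hσ) j
      simpa [Equiv.Perm.mul_apply] using this
    simp only [Equiv.Perm.mul_apply, Equiv.permCongr_apply, Fin.revPerm_apply]
    conv_lhs => rw [eq_finProdFinEquiv x, rev_finProdFinEquiv]
    conv_rhs => rw [eq_finProdFinEquiv x]
    simp [Equiv.prodCongr_apply, rev_finProdFinEquiv, hcomm]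
  · intro x
    conv_lhs => rw [eq_finProdFinEquiv x]
    simp only [Equiv.permCongr_apply, Equiv.symm_apply_apply, Equiv.prodCongr_apply,
      Prod.map, Equiv.refl_apply]
    exact divNat_finProdFinEquiv _ _
end

section
/- Let m ≥ 3 and let G be the semidirect product (Z/2^mZ × Z/2^mZ) ⋊ Z/2Z, where the nontrivial element of Z/2Z acts by swapping the two coordinates. Then G has no normal subgroup isomorphic to the dihedral group of order 8. -/
set_option maxHeartbeats 1000000

/-- The coordinate-swap automorphism of `M × M`. -/
def swapAut (M : Type*) [CommGroup M] : MulAut (M × M) :=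
  (MulEquiv.prodComm : M × M ≃* M × M)

lemma swapAut_sq (M : Type*) [CommGroup M] : swapAut M ^ 2 = 1 := by
  ext x <;> simp [swapAut, sq, MulAut.mul_apply]

/-- The action of `Z/2Z` on `M × M` in which the nontrivial element swaps the two
coordinates. -/
def swapHom (M : Type*) [CommGroup M] : Multiplicative (ZMod 2) →* MulAut (M × M) where
  toFun a := swapAut M ^ (Multiplicative.toAdd a).val
  map_one' := by simp
  map_mul' a b := by
    have key : ∀ n : ℕ, swapAut M ^ (n % 2) = swapAut M ^ n := fun n => by
      conv_rhs => rw [← Nat.div_add_mod n 2]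
      rw [pow_add, pow_mul, swapAut_sq, one_pow, one_mul]
    show swapAut M ^ (Multiplicative.toAdd (a * b)).val = _
    rw [toAdd_mul, ZMod.val_add, key, pow_add]

/-- The wreath product `C_{2^m} ≀ C_2`, i.e. the semidirect product
`(Z/2^mZ × Z/2^mZ) ⋊ Z/2Z` where the nontrivial element of `Z/2Z` swaps the two
coordinates. -/
abbrev WreathC2 (m : ℕ) : Type :=
  (Multiplicative (ZMod (2 ^ m)) × Multiplicative (ZMod (2 ^ m)))
    ⋊[swapHom (Multiplicative (ZMod (2 ^ m)))] Multiplicative (ZMod 2)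

lemma dihedral4_pow_four : ∀ x : DihedralGroup 4, x ^ 4 = 1 := by decide

lemma zmod2_cases : ∀ s : Multiplicative (ZMod 2), s ≠ 1 → Multiplicative.toAdd s = 1 := by
  decide

/-- For `m ≥ 3`, the wreath product `C_{2^m} ≀ C_2 = (Z/2^mZ × Z/2^mZ) ⋊ Z/2Z` (swap
action) has no normal subgroup isomorphic to the dihedral group of order 8. -/
theorem wreath_no_normal_dihedral (m : ℕ) (hm : 3 ≤ m) :
    ¬ ∃ H : Subgroup (WreathC2 m), H.Normal ∧ Nonempty (H ≃* DihedralGroup 4) := by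
  rintro ⟨H, hN, ⟨e⟩⟩
  -- every element of H has fourth power 1
  have hpow : ∀ g ∈ H, g ^ 4 = 1 := by
    intro g hg
    have h4 : (⟨g, hg⟩ : H) ^ 4 = 1 := by
      apply e.injective
      rw [map_pow, map_one, dihedral4_pow_four]
    exact congrArg Subtype.val h4
  -- H is nonabelian, so has an element with nontrivial right component
  have hnc : ∃ g ∈ H, g.right ≠ 1 := by
    by_contra hcon
    push_neg at hcon
    set x : H := e.symm (DihedralGroup.r 1)
    set y : H := e.symm (DihedralGroup.sr 0)
    have hxy : (x : WreathC2 m) * y = (y : WreathC2 m) * x := by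
      apply SemidirectProduct.ext
      · rw [SemidirectProduct.mul_left, SemidirectProduct.mul_left,
          hcon _ x.2, hcon _ y.2, map_one]
        exact mul_comm _ _
      · rw [SemidirectProduct.mul_right, SemidirectProduct.mul_right,
          hcon _ x.2, hcon _ y.2]
    have h1 : x * y = y * x := Subtype.ext hxy
    have h2 := congrArg e h1
    rw [map_mul, map_mul, MulEquiv.apply_symm_apply, MulEquiv.apply_symm_apply] at h2
    exact absurd h2 (by decide)
  obtain ⟨g, hg, hgr⟩ := hnc
  have hs : Multiplicative.toAdd g.right = 1 := zmod2_cases _ hgr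
  -- the action of g.right is the swap
  have hswap : (swapHom (Multiplicative (ZMod (2 ^ m)))) g.right
      = swapAut (Multiplicative (ZMod (2 ^ m))) := by
    show swapAut _ ^ (Multiplicative.toAdd g.right).val = swapAut _
    rw [hs, show ((1 : ZMod 2)).val = 1 from rfl, pow_one]
  have hsw : ∀ p : Multiplicative (ZMod (2 ^ m)) × Multiplicative (ZMod (2 ^ m)),
      (swapAut (Multiplicative (ZMod (2 ^ m)))) p = (p.2, p.1) := fun _ => rfl
  have hss : g.right * g.right = 1 := by
    have h0 : Multiplicative.toAdd (g.right * g.right) = 0 := by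
      rw [toAdd_mul, hs]; decide
    simpa using congrArg Multiplicative.ofAdd h0
  set a : Multiplicative (ZMod (2 ^ m)) := g.left.1 with ha
  set b : Multiplicative (ZMod (2 ^ m)) := g.left.2 with hb
  have hgl : g.left = (a, b) := rfl
  set t : Multiplicative (ZMod (2 ^ m)) := Multiplicative.ofAdd (1 : ZMod (2 ^ m)) with ht
  set n : WreathC2 m := SemidirectProduct.inl (t, 1) with hn
  have hnl : n.left = (t, 1) := rfl
  have hnr : n.right = 1 := rfl
  have hninv : n⁻¹ = SemidirectProduct.inl ((t⁻¹, 1) :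
      Multiplicative (ZMod (2 ^ m)) × Multiplicative (ZMod (2 ^ m))) := by
    rw [hn, ← map_inv, Prod.inv_mk, inv_one]
  have hninvl : (n⁻¹).left = (t⁻¹, 1) := by rw [hninv, SemidirectProduct.left_inl]
  have hninvr : (n⁻¹).right = 1 := by rw [hninv, SemidirectProduct.right_inl]
  -- g * g = inl (a*b, b*a)
  have hx0 : g * g = SemidirectProduct.inl ((a * b, b * a) :
      Multiplicative (ZMod (2 ^ m)) × Multiplicative (ZMod (2 ^ m))) := by
    apply SemidirectProduct.ext
    · rw [SemidirectProduct.mul_left, hswap, hsw, hgl, Prod.mk_mul_mk]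
      rfl
    · rw [SemidirectProduct.mul_right, hss]
      rfl
  -- (n * g * n⁻¹) * g = inl (t*a*b, b*t⁻¹*a)
  have hA : (n * g).left = (t * a, b) := by
    rw [SemidirectProduct.mul_left, hnl, hnr, map_one, MulAut.one_apply, hgl,
      Prod.mk_mul_mk, one_mul]
  have hAr : (n * g).right = g.right := by
    rw [SemidirectProduct.mul_right, hnr, one_mul]
  have hB : (n * g * n⁻¹).left = (t * a, b * t⁻¹) := by
    rw [SemidirectProduct.mul_left, hA, hAr, hninvl, hswap, hsw, Prod.mk_mul_mk, mul_one]
  have hBr : (n * g * n⁻¹).right = g.right := by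
    rw [SemidirectProduct.mul_right, hAr, hninvr, mul_one]
  have hx : (n * g * n⁻¹) * g = SemidirectProduct.inl ((t * a * b, b * t⁻¹ * a) :
      Multiplicative (ZMod (2 ^ m)) × Multiplicative (ZMod (2 ^ m))) := by
    apply SemidirectProduct.ext
    · rw [SemidirectProduct.mul_left, hB, hBr, hswap, hsw, hgl, Prod.mk_mul_mk]
      rfl
    · rw [SemidirectProduct.mul_right, hBr, hss]
      rfl
  -- both are in H, so their fourth powers are 1
  have hm1 : (g * g) ^ 4 = 1 := hpow _ (mul_mem hg hg)
  have hm2 : ((n * g * n⁻¹) * g) ^ 4 = 1 := hpow _ (mul_mem (hN.conj_mem g hg n) hg)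
  have key1 : ((a * b, b * a) : Multiplicative (ZMod (2 ^ m)) × Multiplicative (ZMod (2 ^ m)))
      ^ 4 = 1 :=
    SemidirectProduct.inl_injective (φ := swapHom (Multiplicative (ZMod (2 ^ m))))
      (by rw [map_pow, ← hx0, hm1, map_one])
  have key2 : ((t * a * b, b * t⁻¹ * a) :
      Multiplicative (ZMod (2 ^ m)) × Multiplicative (ZMod (2 ^ m))) ^ 4 = 1 :=
    SemidirectProduct.inl_injective (φ := swapHom (Multiplicative (ZMod (2 ^ m))))
      (by rw [map_pow, ← hx, hm2, map_one])
  have e1 : ((a * b) ^ 4 : Multiplicative (ZMod (2 ^ m))) = 1 := by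
    have := congrArg Prod.fst key1
    simpa using this
  have e2 : ((t * a * b) ^ 4 : Multiplicative (ZMod (2 ^ m))) = 1 := by
    have := congrArg Prod.fst key2
    simpa using this
  have e3 : (t ^ 4 : Multiplicative (ZMod (2 ^ m))) = 1 := by
    have h5 : (t * a * b) ^ 4 = t ^ 4 * (a * b) ^ 4 := by
      rw [mul_assoc, mul_pow]
    rw [h5, e1, mul_one] at e2
    exact e2
  -- so 4 = 0 in ZMod 2^m, contradiction
  have e4 : ((4 : ℕ) : ZMod (2 ^ m)) = 0 := by
    have h6 := congrArg Multiplicative.toAdd e3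
    rw [toAdd_pow, ht] at h6
    simpa using h6
  haveI : NeZero (2 ^ m) := ⟨by positivity⟩
  rw [ZMod.natCast_eq_zero_iff] at e4
  have h8 : 8 ≤ 2 ^ m := by
    calc (8 : ℕ) = 2 ^ 3 := rfl
    _ ≤ 2 ^ m := Nat.pow_le_pow_right (by norm_num) hm
  have h9 := Nat.le_of_dvd (by norm_num) e4
  omega
end
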